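/- If S_1, S_2 ∈ 𝒞(P_1,Q_1) have the same support as their common I-projection S* onto 𝒞(P_2,Q_2) (i.e., I_proj(S_1) = I_proj(S_2) = S* and supp(S_1)=supp(S_2)=supp(S*)), then S_1 = S_2. Consequently, under geometric equivalence, the I-projection from 𝒞(P_1,Q_1) to 𝒞(P_2,Q_2) is injective. -/

import Mathlib

open Finset Filter Topology

def IsProbVec {n : ℕ} (P : Fin n → ℝ) : Prop :=
  (∀ i, 0 ≤ P i) ∧ ∑ i, P i = 1

def supp {α : Type*} (P : α → ℝ) : Set α := {i | 0 < P i}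

def supp2 {n m : ℕ} (S : Fin n → Fin m → ℝ) : Set (Fin n × Fin m) :=
  {p | 0 < S p.1 p.2}

def Coupling {n m : ℕ} (P : Fin n → ℝ) (Q : Fin m → ℝ) : Set (Fin n → Fin m → ℝ) :=
  {S | (∀ i j, 0 ≤ S i j) ∧ (∀ i, ∑ j, S i j = P i) ∧ (∀ j, ∑ i, S i j = Q j)}

/-- Kullback-Leibler divergence of bivariate distributions, as a real-valued sum
(valid, with the convention `0 log 0 = 0`, whenever `supp2 T ⊆ supp2 S`). -/
noncomputable def D2 {n m : ℕ} (T S : Fin n → Fin m → ℝ) : ℝ :=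
  ∑ i, ∑ j, T i j * Real.log (T i j / S i j)

/-- `T'` is an I-projection of `S` onto `𝒯`: it is absolutely continuous w.r.t. `S`
(equivalently, `D(T'‖S) < ∞`) and minimizes the divergence among all such elements of `𝒯`
(elements with `¬ supp2 T ⊆ supp2 S` have infinite divergence). -/
def IsIProj {n m : ℕ} (S : Fin n → Fin m → ℝ) (𝒯 : Set (Fin n → Fin m → ℝ))
    (T' : Fin n → Fin m → ℝ) : Prop :=
  T' ∈ 𝒯 ∧ supp2 T' ⊆ supp2 S ∧ ∀ T ∈ 𝒯, supp2 T ⊆ supp2 S → D2 T' S ≤ D2 T S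

noncomputable def prodDist {n m : ℕ} (P : Fin n → ℝ) (Q : Fin m → ℝ) :
    Fin n → Fin m → ℝ := fun i j => P i * Q j

/-- KL divergence of univariate distributions. -/
noncomputable def Dv {n : ℕ} (P Q : Fin n → ℝ) : ℝ :=
  ∑ i, P i * Real.log (P i / Q i)

def GeomEquiv {n m : ℕ} (C1 C2 : Set (Fin n → Fin m → ℝ)) : Prop :=
  (∀ S ∈ C1, ∃ T ∈ C2, supp2 T = supp2 S) ∧ (∀ T ∈ C2, ∃ S ∈ C1, supp2 S = supp2 T)

private lemma exists_pos_le' {α : Type*} [Fintype α] (r : α → ℝ) (hr : ∀ a, 0 < r a) :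
    ∃ δ : ℝ, 0 < δ ∧ ∀ a, δ ≤ r a := by
  rcases isEmpty_or_nonempty α with h | h
  · exact ⟨1, one_pos, fun a => (h.false a).elim⟩
  · obtain ⟨b, -, hb⟩ := Finset.exists_min_image Finset.univ r
      ⟨Classical.arbitrary α, Finset.mem_univ _⟩
    exact ⟨r b, hr b, fun a => hb a (Finset.mem_univ a)⟩

private lemma mul_log_div' {s : ℝ} (hs : s ≠ 0) (x : ℝ) :
    x * Real.log (x / s) = x * Real.log x - x * Real.log s := by
  rcases eq_or_ne x 0 with rfl | hx
  · simp
  · rw [Real.log_div hx hs]; ring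

private lemma phi_convex {s a b t : ℝ} (hs : 0 < s) (ha : 0 ≤ a) (hb : 0 ≤ b)
    (ht0 : 0 ≤ t) (ht1 : t ≤ 1) :
    ((1 - t) * a + t * b) * Real.log (((1 - t) * a + t * b) / s) ≤
      (1 - t) * (a * Real.log (a / s)) + t * (b * Real.log (b / s)) := by
  have hkey := Real.convexOn_mul_log.2 (Set.mem_Ici.2 ha) (Set.mem_Ici.2 hb)
    (by linarith : (0:ℝ) ≤ 1 - t) ht0 (by ring)
  simp only [smul_eq_mul] at hkey
  rw [mul_log_div' hs.ne' a, mul_log_div' hs.ne' b, mul_log_div' hs.ne']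
  nlinarith [hkey]

private lemma L_eq_zero {n m : ℕ} {P₂ : Fin n → ℝ} {Q₂ : Fin m → ℝ}
    (S Sstar ε : Fin n → Fin m → ℝ)
    (hproj : IsIProj S (Coupling P₂ Q₂) Sstar)
    (hε0 : ∀ i j, Sstar i j = 0 → ε i j = 0)
    (hrow : ∀ i, ∑ j, ε i j = 0) (hcol : ∀ j, ∑ i, ε i j = 0) :
    ∑ i, ∑ j, ε i j * Real.log (Sstar i j / S i j) = 0 := by
  obtain ⟨hmem, hsub, hmin⟩ := hproj
  obtain ⟨hSnn, hSrow, hScol⟩ := hmem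
  have hSpos : ∀ i j, 0 < Sstar i j → 0 < S i j := fun i j h => hsub (show ((i,j) : Fin n × Fin m) ∈ supp2 Sstar from h)
  set L : ℝ := ∑ i, ∑ j, ε i j * Real.log (Sstar i j / S i j) with hL
  set M : ℝ := ∑ i, ∑ j, (if 0 < Sstar i j then ε i j ^ 2 / Sstar i j else 0) with hM
  have hMnn : 0 ≤ M := by
    apply Finset.sum_nonneg; intro i _; apply Finset.sum_nonneg; intro j _
    split
    · positivity
    · exact le_refl 0
  obtain ⟨δ, hδ0, hδ⟩ := exists_pos_le' (fun p : Fin n × Fin m =>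
      if 0 < Sstar p.1 p.2 then Sstar p.1 p.2 / (2 * (|ε p.1 p.2| + 1)) else 1)
    (by
      intro p; split_ifs with h
      · exact div_pos h (by positivity)
      · exact one_pos)
  have key : ∀ t : ℝ, |t| ≤ δ → 0 ≤ t * L + t ^ 2 * M := by
    intro t ht
    set T : Fin n → Fin m → ℝ := fun i j => Sstar i j + t * ε i j with hT
    have hThalf : ∀ i j, 0 < Sstar i j → Sstar i j / 2 ≤ T i j := by
      intro i j hij
      have h1 : δ ≤ Sstar i j / (2 * (|ε i j| + 1)) := by
        have := hδ (i, j); simpa [hij] using this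
      have h2 : |t * ε i j| ≤ Sstar i j / 2 := by
        rw [abs_mul]
        have hε1 : (0:ℝ) < |ε i j| + 1 := by positivity
        have : |t| * |ε i j| ≤ δ * (|ε i j| + 1) :=
          mul_le_mul ht (by linarith [abs_nonneg (ε i j)]) (abs_nonneg _) hδ0.le
        have h3 : δ * (|ε i j| + 1) ≤ Sstar i j / 2 := by
          have h1' : δ * (2 * (|ε i j| + 1)) ≤ Sstar i j :=
            (le_div_iff₀ (by positivity)).1 h1
          linarith
        linarith
      have := neg_abs_le (t * ε i j)
      simp only [hT]; linarith
    have hTnn : ∀ i j, 0 ≤ T i j := by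
      intro i j
      rcases (hSnn i j).lt_or_eq with h | h
      · exact le_trans (by linarith : (0:ℝ) ≤ Sstar i j / 2) (hThalf i j h)
      · simp [hT, ← h, hε0 i j h.symm]
    have hTmem : T ∈ Coupling P₂ Q₂ := by
      refine ⟨hTnn, fun i => ?_, fun j => ?_⟩
      · simp [hT, Finset.sum_add_distrib, ← Finset.mul_sum, hrow, hSrow]
      · simp [hT, Finset.sum_add_distrib, ← Finset.mul_sum, hcol, hScol]
    have hTsub : supp2 T ⊆ supp2 S := by
      intro p hp
      rcases (hSnn p.1 p.2).lt_or_eq with h | h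
      · exact hSpos p.1 p.2 h
      · exfalso
        have : T p.1 p.2 = 0 := by simp [hT, ← h, hε0 p.1 p.2 h.symm]
        exact absurd hp (by simp [supp2, this])
    have hDT := hmin T hTmem hTsub
    have hentry : ∀ i j, T i j * Real.log (T i j / S i j) ≤
        Sstar i j * Real.log (Sstar i j / S i j) +
          (t * (ε i j * Real.log (Sstar i j / S i j)) + t * ε i j +
            t ^ 2 * (if 0 < Sstar i j then ε i j ^ 2 / Sstar i j else 0)) := by
      intro i j
      rcases (hSnn i j).lt_or_eq with ha | ha
      · -- Sstar i j > 0
        have hs := hSpos i j ha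
        have hx : 0 < T i j := lt_of_lt_of_le (by linarith) (hThalf i j ha)
        rw [if_pos ha]
        rw [mul_log_div' hs.ne' (T i j), mul_log_div' hs.ne' (Sstar i j),
          Real.log_div ha.ne' hs.ne']
        have hlog : Real.log (T i j) - Real.log (Sstar i j) ≤ T i j / Sstar i j - 1 := by
          have := Real.log_le_sub_one_of_pos (x := T i j / Sstar i j) (by positivity)
          rwa [Real.log_div hx.ne' ha.ne'] at this
        have h3 : T i j * (Real.log (T i j) - Real.log (Sstar i j)) ≤
            T i j * (T i j / Sstar i j - 1) :=
          mul_le_mul_of_nonneg_left hlog hx.le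
        have h4 : T i j * (T i j / Sstar i j - 1) = t * ε i j + t ^ 2 * (ε i j ^ 2 / Sstar i j) := by
          have hTe : T i j = Sstar i j + t * ε i j := rfl
          field_simp [hTe]
          ring
        have h5 : T i j * Real.log (S i j) =
            Sstar i j * Real.log (S i j) + t * ε i j * Real.log (S i j) := by
          have hTe : T i j = Sstar i j + t * ε i j := rfl
          rw [hTe]; ring
        have h6 : T i j * Real.log (Sstar i j) =
            Sstar i j * Real.log (Sstar i j) + t * ε i j * Real.log (Sstar i j) := by
          have hTe : T i j = Sstar i j + t * ε i j := rfl
          rw [hTe]; ring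
        nlinarith [h3, h4, h5, h6]
      · -- Sstar i j = 0
        have hz := hε0 i j ha.symm
        have : T i j = 0 := by simp [hT, ← ha, hz]
        simp [this, ← ha, hz]
    have hsum : D2 T S ≤ D2 Sstar S + (t * L + t * 0 + t ^ 2 * M) := by
      have h1 : D2 T S ≤ ∑ i, ∑ j, (Sstar i j * Real.log (Sstar i j / S i j) +
          (t * (ε i j * Real.log (Sstar i j / S i j)) + t * ε i j +
            t ^ 2 * (if 0 < Sstar i j then ε i j ^ 2 / Sstar i j else 0))) := by
        apply Finset.sum_le_sum; intro i _; apply Finset.sum_le_sum; intro j _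
        exact hentry i j
      have h2 : ∑ i, ∑ j, (Sstar i j * Real.log (Sstar i j / S i j) +
          (t * (ε i j * Real.log (Sstar i j / S i j)) + t * ε i j +
            t ^ 2 * (if 0 < Sstar i j then ε i j ^ 2 / Sstar i j else 0))) =
          D2 Sstar S + (t * L + t * 0 + t ^ 2 * M) := by
        simp only [Finset.sum_add_distrib, ← Finset.mul_sum, D2, hL, hM]
        have hz : ∑ i : Fin n, ∑ j : Fin m, ε i j = 0 := by simp [hrow]
        rw [hz]
        try ring
      calc D2 T S ≤ _ := h1
        _ = _ := h2
    linarith [hDT, hsum]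
  -- conclude L = 0
  by_contra hLne
  have hLpos : 0 < |L| := abs_pos.2 hLne
  set u : ℝ := min δ (|L| / (2 * M + 1)) with hu
  have hu0 : 0 < u := lt_min hδ0 (by positivity)
  have huδ : u ≤ δ := min_le_left _ _
  have h1 := key u (by rw [abs_of_pos hu0]; exact huδ)
  have h2 := key (-u) (by rw [abs_neg, abs_of_pos hu0]; exact huδ)
  have habs : u * |L| ≤ u ^ 2 * M := by
    rcases abs_cases L with ⟨h, -⟩ | ⟨h, -⟩ <;> nlinarith
  have hM' : |L| ≤ u * M := by
    have := (mul_le_mul_iff_right₀ hu0).1 (by nlinarith : u * |L| ≤ u * (u * M))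
    linarith
  have hle : u * (2 * M + 1) ≤ |L| :=
    (le_div_iff₀ (by positivity)).1 (min_le_right _ _)
  nlinarith [hM', hle, mul_nonneg hu0.le hMnn, hu0]

private lemma mul_nonneg_of_nonpos_nonpos' {a b : ℝ} (ha : a ≤ 0) (hb : b ≤ 0) : 0 ≤ a * b := by
  nlinarith

private lemma part1 {n m : ℕ} {P₁ P₂ : Fin n → ℝ} {Q₁ Q₂ : Fin m → ℝ}
    (S₁ S₂ Sstar : Fin n → Fin m → ℝ)
    (h1 : S₁ ∈ Coupling P₁ Q₁) (h2 : S₂ ∈ Coupling P₁ Q₁)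
    (hp1 : IsIProj S₁ (Coupling P₂ Q₂) Sstar) (hp2 : IsIProj S₂ (Coupling P₂ Q₂) Sstar)
    (hs1 : supp2 S₁ = supp2 Sstar) (hs2 : supp2 S₂ = supp2 Sstar) : S₁ = S₂ := by
  obtain ⟨h1nn, h1row, h1col⟩ := h1
  obtain ⟨h2nn, h2row, h2col⟩ := h2
  have hstarnn : ∀ i j, 0 ≤ Sstar i j := hp1.1.1
  have hiff1 : ∀ i j, 0 < S₁ i j ↔ 0 < Sstar i j := fun i j => Set.ext_iff.1 hs1 (i, j)
  have hiff2 : ∀ i j, 0 < S₂ i j ↔ 0 < Sstar i j := fun i j => Set.ext_iff.1 hs2 (i, j)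
  set ε : Fin n → Fin m → ℝ := fun i j => S₂ i j - S₁ i j with hε
  have hzero : ∀ i j, Sstar i j = 0 → S₁ i j = 0 ∧ S₂ i j = 0 := by
    intro i j h
    constructor
    · refine le_antisymm (not_lt.1 fun hp => ?_) (h1nn i j)
      have := (hiff1 i j).1 hp; rw [h] at this; exact lt_irrefl 0 this
    · refine le_antisymm (not_lt.1 fun hp => ?_) (h2nn i j)
      have := (hiff2 i j).1 hp; rw [h] at this; exact lt_irrefl 0 this
  have hε0 : ∀ i j, Sstar i j = 0 → ε i j = 0 := by
    intro i j h
    obtain ⟨ha, hb⟩ := hzero i j h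
    simp [hε, ha, hb]
  have hεrow : ∀ i, ∑ j, ε i j = 0 := by
    intro i; simp [hε, Finset.sum_sub_distrib, h1row, h2row]
  have hεcol : ∀ j, ∑ i, ε i j = 0 := by
    intro j; simp [hε, Finset.sum_sub_distrib, h1col, h2col]
  have hL1 := L_eq_zero S₁ Sstar ε hp1 hε0 hεrow hεcol
  have hL2 := L_eq_zero S₂ Sstar ε hp2 hε0 hεrow hεcol
  have hK : ∑ i, ∑ j, ε i j * (Real.log (S₂ i j) - Real.log (S₁ i j)) = 0 := by
    have hptw : ∀ i j, ε i j * (Real.log (S₂ i j) - Real.log (S₁ i j)) =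
        ε i j * Real.log (Sstar i j / S₁ i j) - ε i j * Real.log (Sstar i j / S₂ i j) := by
      intro i j
      rcases (hstarnn i j).lt_or_eq with h | h
      · have ha := (hiff1 i j).2 h
        have hb := (hiff2 i j).2 h
        rw [Real.log_div h.ne' ha.ne', Real.log_div h.ne' hb.ne']
        ring
      · simp [hε0 i j h.symm]
    calc ∑ i, ∑ j, ε i j * (Real.log (S₂ i j) - Real.log (S₁ i j))
        = ∑ i, ∑ j, (ε i j * Real.log (Sstar i j / S₁ i j) -
            ε i j * Real.log (Sstar i j / S₂ i j)) := by
          exact Finset.sum_congr rfl fun i _ => Finset.sum_congr rfl fun j _ => hptw i j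
      _ = (∑ i, ∑ j, ε i j * Real.log (Sstar i j / S₁ i j)) -
            ∑ i, ∑ j, ε i j * Real.log (Sstar i j / S₂ i j) := by
          simp [Finset.sum_sub_distrib]
      _ = 0 := by rw [hL1, hL2]; ring
  have hterm_nonneg : ∀ i j, 0 ≤ ε i j * (Real.log (S₂ i j) - Real.log (S₁ i j)) := by
    intro i j
    rcases (hstarnn i j).lt_or_eq with h | h
    · have ha := (hiff1 i j).2 h
      have hb := (hiff2 i j).2 h
      rcases le_or_gt (S₁ i j) (S₂ i j) with hab | hab
      · exact mul_nonneg (by simp [hε]; linarith)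
          (sub_nonneg.2 (Real.log_le_log ha hab))
      · exact mul_nonneg_of_nonpos_nonpos' (by simp [hε]; linarith)
          (sub_nonpos.2 (Real.log_le_log hb hab.le))
    · simp [hε0 i j h.symm]
  have houter := (Finset.sum_eq_zero_iff_of_nonneg
    (fun i _ => Finset.sum_nonneg fun j _ => hterm_nonneg i j)).1 hK
  have hterm : ∀ i j, ε i j * (Real.log (S₂ i j) - Real.log (S₁ i j)) = 0 := by
    intro i j
    exact (Finset.sum_eq_zero_iff_of_nonneg fun j _ => hterm_nonneg i j).1
      (houter i (Finset.mem_univ i)) j (Finset.mem_univ j)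
  funext i j
  rcases (hstarnn i j).lt_or_eq with h | h
  · have ha := (hiff1 i j).2 h
    have hb := (hiff2 i j).2 h
    by_contra hne
    rcases lt_or_gt_of_ne hne with hlt | hlt
    · have hlog := Real.log_lt_log ha hlt
      have : 0 < ε i j * (Real.log (S₂ i j) - Real.log (S₁ i j)) :=
        mul_pos (by simp [hε]; linarith) (by linarith)
      rw [hterm i j] at this; exact lt_irrefl 0 this
    · have hlog := Real.log_lt_log hb hlt
      have : 0 < ε i j * (Real.log (S₂ i j) - Real.log (S₁ i j)) :=
        mul_pos_of_neg_of_neg (by simp [hε]; linarith) (by linarith)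
      rw [hterm i j] at this; exact lt_irrefl 0 this
  · obtain ⟨ha, hb⟩ := hzero i j h.symm
    rw [ha, hb]

private lemma supp_eq_of_geom {n m : ℕ} {P₂ : Fin n → ℝ} {Q₂ : Fin m → ℝ}
    (S Sstar T : Fin n → Fin m → ℝ)
    (hSnn : ∀ i j, 0 ≤ S i j)
    (hT : T ∈ Coupling P₂ Q₂) (hTs : supp2 T = supp2 S)
    (hproj : IsIProj S (Coupling P₂ Q₂) Sstar) : supp2 S = supp2 Sstar := by
  obtain ⟨hmem, hsub, hmin⟩ := hproj
  obtain ⟨hstarnn, hstarrow, hstarcol⟩ := hmem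
  obtain ⟨hTnn, hTrow, hTcol⟩ := hT
  have hTiff : ∀ i j, 0 < T i j ↔ 0 < S i j := fun i j => Set.ext_iff.1 hTs (i, j)
  -- zero transfer
  have hS0 : ∀ i j, S i j = 0 → Sstar i j = 0 ∧ T i j = 0 := by
    intro i j h
    constructor
    · refine le_antisymm (not_lt.1 fun hp => ?_) (hstarnn i j)
      have : 0 < S i j := hsub (show ((i,j) : Fin n × Fin m) ∈ supp2 Sstar from hp)
      rw [h] at this; exact lt_irrefl 0 this
    · refine le_antisymm (not_lt.1 fun hp => ?_) (hTnn i j)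
      have := (hTiff i j).1 hp; rw [h] at this; exact lt_irrefl 0 this
  refine (Set.Subset.antisymm hsub ?_).symm
  intro p hp
  by_contra hc
  have hSp : 0 < S p.1 p.2 := hp
  have hstarp : Sstar p.1 p.2 = 0 :=
    le_antisymm (not_lt.1 hc) (hstarnn p.1 p.2)
  have hTp : 0 < T p.1 p.2 := (hTiff p.1 p.2).2 hSp
  -- the mass of T outside supp Sstar
  set c : ℝ := ∑ i, ∑ j, (if Sstar i j = 0 then T i j else 0) with hc'
  have hcnn : ∀ i j, (0:ℝ) ≤ if Sstar i j = 0 then T i j else 0 := by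
    intro i j; split
    · exact hTnn i j
    · exact le_refl 0
  have hcpos : 0 < c := by
    have h1 : T p.1 p.2 ≤ ∑ j, (if Sstar p.1 j = 0 then T p.1 j else 0) := by
      have := Finset.single_le_sum (f := fun j => if Sstar p.1 j = 0 then T p.1 j else 0)
        (fun j _ => hcnn p.1 j) (Finset.mem_univ p.2)
      simpa [hstarp] using this
    have h2 : ∑ j, (if Sstar p.1 j = 0 then T p.1 j else 0) ≤ c := by
      exact Finset.single_le_sum (f := fun i => ∑ j, (if Sstar i j = 0 then T i j else 0))
        (fun i _ => Finset.sum_nonneg fun j _ => hcnn i j) (Finset.mem_univ p.1)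
    linarith
  -- choose t
  set t : ℝ := min (1/2) (Real.exp ((D2 Sstar S - D2 T S - 1) / c)) with ht'
  have ht0 : 0 < t := lt_min (by norm_num) (Real.exp_pos _)
  have ht1 : t ≤ 1/2 := min_le_left _ _
  have hlogt : Real.log t * c ≤ D2 Sstar S - D2 T S - 1 := by
    have h1 : Real.log t ≤ (D2 Sstar S - D2 T S - 1) / c := by
      calc Real.log t ≤ Real.log (Real.exp ((D2 Sstar S - D2 T S - 1) / c)) :=
            Real.log_le_log ht0 (min_le_right _ _)
        _ = _ := Real.log_exp _
    calc Real.log t * c ≤ ((D2 Sstar S - D2 T S - 1) / c) * c :=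
          mul_le_mul_of_nonneg_right h1 hcpos.le
      _ = D2 Sstar S - D2 T S - 1 := by field_simp
  -- the mixture
  set Tt : Fin n → Fin m → ℝ := fun i j => (1 - t) * Sstar i j + t * T i j with hTt
  have hTtnn : ∀ i j, 0 ≤ Tt i j :=
    fun i j => add_nonneg (mul_nonneg (by linarith) (hstarnn i j))
      (mul_nonneg ht0.le (hTnn i j))
  have hTtmem : Tt ∈ Coupling P₂ Q₂ := by
    refine ⟨hTtnn, fun i => ?_, fun j => ?_⟩
    · simp only [hTt, Finset.sum_add_distrib, ← Finset.mul_sum, hstarrow, hTrow]; ring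
    · simp only [hTt, Finset.sum_add_distrib, ← Finset.mul_sum, hstarcol, hTcol]; ring
  have hTtsub : supp2 Tt ⊆ supp2 S := by
    intro q hq
    rcases (hSnn q.1 q.2).lt_or_eq with h | h
    · exact h
    · exfalso
      obtain ⟨ha, hb⟩ := hS0 q.1 q.2 h.symm
      have : Tt q.1 q.2 = 0 := by simp [hTt, ha, hb]
      exact absurd hq (by simp [supp2, this])
  have hchain := hmin Tt hTtmem hTtsub
  -- entrywise bound
  have hentry : ∀ i j, Tt i j * Real.log (Tt i j / S i j) ≤
      (1 - t) * (Sstar i j * Real.log (Sstar i j / S i j)) +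
        t * (T i j * Real.log (T i j / S i j)) +
        Real.log t * (t * (if Sstar i j = 0 then T i j else 0)) := by
    intro i j
    rcases (hSnn i j).lt_or_eq with hs | hs
    · have hb : 0 < T i j := (hTiff i j).2 hs
      by_cases ha : Sstar i j = 0
      · have hTte : Tt i j = t * T i j := by simp [hTt, ha]
        rw [hTte, ha, if_pos rfl]
        have : t * T i j / S i j = t * (T i j / S i j) := by ring
        rw [this, Real.log_mul ht0.ne' (by positivity), Real.log_div hb.ne' hs.ne']
        simp only [zero_mul, mul_zero]
        exact le_of_eq (by ring)
      · have ha' : 0 < Sstar i j := (hstarnn i j).lt_of_ne (Ne.symm ha)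
        have := phi_convex (a := Sstar i j) (b := T i j) hs (hstarnn i j) (hTnn i j)
          ht0.le (by linarith)
        simp only [if_neg ha, mul_zero]
        calc Tt i j * Real.log (Tt i j / S i j)
            ≤ (1 - t) * (Sstar i j * Real.log (Sstar i j / S i j)) +
              t * (T i j * Real.log (T i j / S i j)) := this
          _ = _ := by ring
    · obtain ⟨ha, hb⟩ := hS0 i j hs.symm
      have : Tt i j = 0 := by simp [hTt, ha, hb]
      simp [this, ha, hb]
  have hsum : D2 Tt S ≤ (1 - t) * D2 Sstar S + t * D2 T S + Real.log t * (t * c) := by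
    have h1 : D2 Tt S ≤ ∑ i, ∑ j, ((1 - t) * (Sstar i j * Real.log (Sstar i j / S i j)) +
        t * (T i j * Real.log (T i j / S i j)) +
        Real.log t * (t * (if Sstar i j = 0 then T i j else 0))) :=
      Finset.sum_le_sum fun i _ => Finset.sum_le_sum fun j _ => hentry i j
    have h2 : ∑ i, ∑ j, ((1 - t) * (Sstar i j * Real.log (Sstar i j / S i j)) +
        t * (T i j * Real.log (T i j / S i j)) +
        Real.log t * (t * (if Sstar i j = 0 then T i j else 0))) =
        (1 - t) * D2 Sstar S + t * D2 T S + Real.log t * (t * c) := by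
      simp only [Finset.sum_add_distrib, ← Finset.mul_sum, D2, hc']
    linarith
  -- conclude contradiction
  have hdiv : D2 Sstar S ≤ D2 T S + Real.log t * c := by
    have h3 : t * D2 Sstar S ≤ t * (D2 T S + Real.log t * c) := by nlinarith [hchain, hsum]
    exact (mul_le_mul_iff_right₀ ht0).1 h3
  nlinarith [hdiv, hlogt]

theorem stmt13 {n m : ℕ} (P₁ P₂ : Fin n → ℝ) (Q₁ Q₂ : Fin m → ℝ)
    (hP₁ : IsProbVec P₁) (hQ₁ : IsProbVec Q₁) (hP₂ : IsProbVec P₂) (hQ₂ : IsProbVec Q₂) :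
    (∀ S₁ S₂ Sstar : Fin n → Fin m → ℝ,
      S₁ ∈ Coupling P₁ Q₁ → S₂ ∈ Coupling P₁ Q₁ →
      IsIProj S₁ (Coupling P₂ Q₂) Sstar → IsIProj S₂ (Coupling P₂ Q₂) Sstar →
      supp2 S₁ = supp2 Sstar → supp2 S₂ = supp2 Sstar → S₁ = S₂) ∧
    (GeomEquiv (Coupling P₁ Q₁) (Coupling P₂ Q₂) →
      ∀ S₁ S₂ Sstar : Fin n → Fin m → ℝ,
        S₁ ∈ Coupling P₁ Q₁ → S₂ ∈ Coupling P₁ Q₁ →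
        IsIProj S₁ (Coupling P₂ Q₂) Sstar → IsIProj S₂ (Coupling P₂ Q₂) Sstar →
        S₁ = S₂) := by
  constructor
  · intro S₁ S₂ Sstar h1 h2 hp1 hp2 hs1 hs2
    exact part1 S₁ S₂ Sstar h1 h2 hp1 hp2 hs1 hs2
  · intro hge S₁ S₂ Sstar h1 h2 hp1 hp2
    obtain ⟨T₁, hT₁, hTs₁⟩ := hge.1 S₁ h1
    obtain ⟨T₂, hT₂, hTs₂⟩ := hge.1 S₂ h2
    have e1 := supp_eq_of_geom S₁ Sstar T₁ h1.1 hT₁ hTs₁ hp1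
    have e2 := supp_eq_of_geom S₂ Sstar T₂ h2.1 hT₂ hTs₂ hp2
    exact part1 S₁ S₂ Sstar h1 h2 hp1 hp2 e1 e2
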